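/- Let A be a topological L-algebra and let K ⊆ A be a clopen subset. Then the syntactic congruence σ_K is closed, i.e., the set {p : A × A | σ_K p.1 p.2} is a closed subset of A × A. -/

import Mathlib

open FirstOrder Language Structure

/-- An elementary translation of an `L`-algebra `A`. -/
def IsElemTranslation (L : FirstOrder.Language) {A : Type*} [L.Structure A]
    (g : Function.End A) : Prop :=
  ∃ (n : ℕ) (f : L.Functions n) (i : Fin n) (v : Fin n → A),
    g = fun a => funMap f (Function.update v i a)

/-- The translation monoid `M(A)`. -/
def translationMonoid (L : FirstOrder.Language) (A : Type*) [L.Structure A] :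
    Submonoid (Function.End A) :=
  Submonoid.closure {g | IsElemTranslation L g}

/-- The syntactic congruence of `K ⊆ A`. -/
def syntCong (L : FirstOrder.Language) {A : Type*} [L.Structure A] (K : Set A)
    (a b : A) : Prop :=
  ∀ g ∈ translationMonoid L A, (g a ∈ K ↔ g b ∈ K)

/-- In a topological `L`-algebra, the syntactic congruence of a clopen set is closed. -/
theorem syntCong_isClosed_of_isClopen (L : FirstOrder.Language) {A : Type*}
    [TopologicalSpace A] [L.Structure A]
    (hA : ∀ (n : ℕ) (f : L.Functions n), Continuous fun v : Fin n → A => funMap f v)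
    (K : Set A) (hK : IsClopen K) :
    IsClosed {p : A × A | syntCong L K p.1 p.2} := by
  have hcont : ∀ g ∈ translationMonoid L A, Continuous g := by
    intro g hg
    induction hg using Submonoid.closure_induction with
    | mem g hg =>
      obtain ⟨n, f, i, v, rfl⟩ := hg
      exact (hA n f).comp (continuous_pi fun j => by
        by_cases h : j = i
        · subst h; simpa [Function.update] using continuous_id'
        · simpa [Function.update, h] using continuous_const)
    | one => exact continuous_id
    | mul g h _ _ hg hh => exact hg.comp hh
  have : {p : A × A | syntCong L K p.1 p.2} =
      ⋂ g ∈ translationMonoid L A,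
        ((fun p : A × A => (g p.1, g p.2)) ⁻¹' (K ×ˢ K ∪ Kᶜ ×ˢ Kᶜ)) := by
    ext p
    simp only [Set.mem_setOf_eq, Set.mem_iInter, Set.mem_preimage, Set.mem_union,
      Set.mem_prod, Set.mem_compl_iff, syntCong]
    constructor
    · intro h g hg; rcases (h g hg) with h'; tauto
    · intro h g hg; rcases h g hg with ⟨h1, h2⟩ | ⟨h1, h2⟩ <;> simp [h1, h2]
  rw [this]
  refine isClosed_biInter fun g hg => ?_
  have hgc : Continuous fun p : A × A => (g p.1, g p.2) :=
    ((hcont g hg).comp continuous_fst).prodMk ((hcont g hg).comp continuous_snd)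
  exact ((hK.isClosed.prod hK.isClosed).union
    (hK.compl.isClosed.prod hK.compl.isClosed)).preimage hgc
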